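/- An open set D ⊆ ℂⁿ that is the union of an increasing sequence D₁ ⊆ D₂ ⊆ ⋯ of pseudoconvex open subsets is pseudoconvex. -/

import Mathlib

open Metric MeasureTheory Real Filter Set

noncomputable section

/-- `u` is plurisubharmonic on `D`: upper semicontinuous on `D` and satisfies the
sub-mean value inequality on every circle contained (with its disc) in `D` along
every complex line. -/
def PlurisubharmonicOn {E : Type*} [NormedAddCommGroup E] [NormedSpace ℂ E]
    (u : E → ℝ) (D : Set E) : Prop :=
  UpperSemicontinuousOn u D ∧
  ∀ (a v : E) (r : ℝ), 0 < r →
    (∀ t : ℂ, ‖t‖ ≤ r → a + t • v ∈ D) →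
    u a ≤ (2 * π)⁻¹ *
      ∫ θ in (0:ℝ)..(2*π), u (a + (((r : ℂ) * Complex.exp (θ * Complex.I)) • v))

/-- `D` is pseudoconvex: open, and either all of the space or
`-log (boundary distance)` is plurisubharmonic on `D`. -/
def Pseudoconvex {E : Type*} [NormedAddCommGroup E] [NormedSpace ℂ E]
    (D : Set E) : Prop :=
  IsOpen D ∧ (D = Set.univ ∨
    PlurisubharmonicOn (fun z => -Real.log (Metric.infDist z Dᶜ)) D)

/-- Strict plurisubharmonicity: near each point, `u` minus a small multiple of
`‖· - z‖²` is still plurisubharmonic. -/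
def StrictPlurisubharmonicOn {E : Type*} [NormedAddCommGroup E] [NormedSpace ℂ E]
    (u : E → ℝ) (U : Set E) : Prop :=
  ∀ z ∈ U, ∃ ε > (0:ℝ), ∃ r > (0:ℝ), Metric.ball z r ⊆ U ∧
    PlurisubharmonicOn (fun w => u w - ε * ‖w - z‖ ^ 2) (Metric.ball z r)

/-- `f`, holomorphic on `D`, does not extend holomorphically through the boundary point `p`. -/
def NotExtendableAt {E : Type*} [NormedAddCommGroup E] [NormedSpace ℂ E]
    (f : E → ℂ) (D : Set E) (p : E) : Prop :=
  ¬ ∃ (U : Set E) (g : E → ℂ), IsOpen U ∧ p ∈ U ∧ DifferentiableOn ℂ g U ∧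
      ∃ V : Set E, IsOpen V ∧ V.Nonempty ∧ V ⊆ D ∩ U ∧ Set.EqOn f g V

/-- Domain of holomorphy: for each boundary point some holomorphic function on `D`
does not extend through it. -/
def DomainOfHolomorphy {E : Type*} [NormedAddCommGroup E] [NormedSpace ℂ E]
    (D : Set E) : Prop :=
  IsOpen D ∧ ∀ p ∈ frontier D, ∃ f : E → ℂ,
    DifferentiableOn ℂ f D ∧ NotExtendableAt f D p

open Topology

set_option maxHeartbeats 4000000 in
/-- Behnke–Stein: an increasing union of pseudoconvex open sets in ℂⁿ
is pseudoconvex. -/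
theorem stmt6 (n : ℕ) (D : ℕ → Set (EuclideanSpace ℂ (Fin n)))
    (hmono : Monotone D) (hpc : ∀ j, Pseudoconvex (D j)) :
    Pseudoconvex (⋃ j, D j) := by
  set U := ⋃ j, D j with hU
  have hUo : IsOpen U := isOpen_iUnion fun j => (hpc j).1
  refine ⟨hUo, ?_⟩
  by_cases huniv : U = Set.univ
  · exact Or.inl huniv
  right
  have hUc : Uᶜ.Nonempty := nonempty_compl.mpr huniv
  have hDsub : ∀ j, D j ⊆ U := fun j => le_iSup D j
  have hDc : ∀ j, (D j)ᶜ.Nonempty := fun j => hUc.mono (compl_subset_compl.mpr (hDsub j))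
  have hsub : ∀ (z : EuclideanSpace ℂ (Fin n)) j, infDist z (D j)ᶜ ≤ infDist z Uᶜ :=
    fun z j => infDist_le_infDist_of_subset (compl_subset_compl.mpr (hDsub j)) hUc
  have hmonod : ∀ (z : EuclideanSpace ℂ (Fin n)), Monotone fun j => infDist z (D j)ᶜ :=
    fun z i j hij => infDist_le_infDist_of_subset (compl_subset_compl.mpr (hmono hij)) (hDc j)
  -- positivity of boundary distance inside the sets
  have hposU : ∀ z ∈ U, 0 < infDist z Uᶜ := fun z hz =>
    (hUo.isClosed_compl.notMem_iff_infDist_pos hUc).mp (by simpa using hz)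
  have hposD : ∀ j, ∀ z ∈ D j, 0 < infDist z (D j)ᶜ := fun j z hz =>
    ((hpc j).1.isClosed_compl.notMem_iff_infDist_pos (hDc j)).mp (by simpa using hz)
  -- convergence of boundary distances
  have htends : ∀ z ∈ U, Tendsto (fun j => infDist z (D j)ᶜ) atTop (𝓝 (infDist z Uᶜ)) := by
    intro z hz
    rw [Metric.tendsto_atTop]
    intro ε hε
    set d := infDist z Uᶜ with hd
    rcases le_or_gt d (ε / 2) with h | h
    · refine ⟨0, fun j _ => ?_⟩
      have h1 := hsub z j
      have h2 : (0:ℝ) ≤ infDist z (D j)ᶜ := infDist_nonneg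
      rw [Real.dist_eq, abs_lt]; constructor <;> linarith
    · have hρ : (0:ℝ) < d - ε / 2 := by linarith
      have hball : closedBall z (d - ε / 2) ⊆ U := by
        intro x hx
        by_contra hxU
        have h1 : infDist z Uᶜ ≤ dist z x := infDist_le_dist_of_mem hxU
        have h2 : dist z x ≤ d - ε / 2 := by rw [dist_comm]; exact mem_closedBall.mp hx
        linarith
      obtain ⟨N, hN⟩ := (isCompact_closedBall z (d - ε / 2)).elim_directed_cover D
        (fun j => (hpc j).1) hball hmono.directed_le
      refine ⟨N, fun j hj => ?_⟩
      have hDj : closedBall z (d - ε / 2) ⊆ D j := hN.trans (hmono hj)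
      have hge : d - ε / 2 ≤ infDist z (D j)ᶜ := by
        by_contra hlt
        push_neg at hlt
        obtain ⟨y, hy, hylt⟩ := (infDist_lt_iff (hDc j)).mp hlt
        exact hy (hDj (mem_closedBall.mpr (by rw [dist_comm]; linarith)))
      have h1 := hsub z j
      rw [Real.dist_eq, abs_lt]; constructor <;> linarith
  -- continuity of the limit function on U
  have hfc : ContinuousOn (fun z => -Real.log (infDist z Uᶜ)) U := by
    intro z hz
    exact (((continuous_infDist_pt Uᶜ).continuousAt.log (hposU z hz).ne').neg).continuousWithinAt
  refine ⟨hfc.upperSemicontinuousOn, ?_⟩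
  intro a v r hr hcirc
  -- the compact disc
  set K : Set (EuclideanSpace ℂ (Fin n)) :=
    (fun t : ℂ => a + t • v) '' closedBall 0 r with hK
  have hKc : IsCompact K := (isCompact_closedBall 0 r).image (continuous_const.add (continuous_id.smul continuous_const))
  have hKU : K ⊆ U := by
    rintro _ ⟨t, ht, rfl⟩
    exact hcirc t (by simpa [dist_zero_right] using mem_closedBall.mp ht)
  obtain ⟨N, hN⟩ := hKc.elim_directed_cover D (fun j => (hpc j).1) hKU hmono.directed_le
  set c : ℝ → EuclideanSpace ℂ (Fin n) :=
    fun θ => a + ((r : ℂ) * Complex.exp (θ * Complex.I)) • v with hc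
  have hcK : ∀ θ : ℝ, c θ ∈ K := by
    intro θ
    refine ⟨(r : ℂ) * Complex.exp (θ * Complex.I), ?_, rfl⟩
    simp only [mem_closedBall, dist_zero_right, norm_mul, Complex.norm_real,
      Real.norm_eq_abs, Complex.norm_exp_ofReal_mul_I, mul_one, abs_of_pos hr, le_refl]
  have haK : a ∈ K := ⟨0, by simpa using hr.le, by simp⟩
  have hccont : Continuous c := by
    apply continuous_const.add
    exact ((continuous_const.mul ((Complex.continuous_ofReal.mul continuous_const).cexp))).smul
      continuous_const
  -- the sequence of functions
  set g : ℕ → ℝ → ℝ := fun k θ => -Real.log (infDist (c θ) (D (N + k))ᶜ) with hg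
  set G : ℝ → ℝ := fun θ => -Real.log (infDist (c θ) Uᶜ) with hG
  have hKDk : ∀ k : ℕ, K ⊆ D (N + k) := fun k => hN.trans (hmono (Nat.le_add_right N k))
  have hgcont : ∀ k, Continuous (g k) := by
    intro k
    have : ∀ θ : ℝ, ContinuousAt (g k) θ := fun θ =>
      ((((continuous_infDist_pt (D (N + k))ᶜ).comp hccont).continuousAt.log
        (hposD _ _ (hKDk k (hcK θ))).ne').neg)
    exact continuous_iff_continuousAt.mpr this
  have hGcont : Continuous G := by
    have : ∀ θ : ℝ, ContinuousAt G θ := fun θ =>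
      ((((continuous_infDist_pt Uᶜ).comp hccont).continuousAt.log
        (hposU _ (hKU (hcK θ))).ne').neg)
    exact continuous_iff_continuousAt.mpr this
  have h2π : (0:ℝ) ≤ 2 * π := by positivity
  -- pointwise limits and monotonicity
  have hganti : ∀ θ : ℝ, Antitone fun k => g k θ := by
    intro θ k l hkl
    have h1 : 0 < infDist (c θ) (D (N + k))ᶜ := hposD _ _ (hKDk k (hcK θ))
    have h2 : infDist (c θ) (D (N + k))ᶜ ≤ infDist (c θ) (D (N + l))ᶜ :=
      hmonod _ (by omega)
    exact neg_le_neg (Real.log_le_log h1 h2)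
  have hgtends : ∀ θ : ℝ, Tendsto (fun k => g k θ) atTop (𝓝 (G θ)) := by
    intro θ
    have h1 : Tendsto (fun j => infDist (c θ) (D j)ᶜ) atTop (𝓝 (infDist (c θ) Uᶜ)) :=
      htends _ (hKU (hcK θ))
    have h2 : Tendsto (fun k : ℕ => N + k) atTop atTop := tendsto_atTop_mono (fun k => Nat.le_add_left k N) tendsto_id
    have h3 : Tendsto (fun k : ℕ => infDist (c θ) (D (N + k))ᶜ) atTop
        (𝓝 (infDist (c θ) Uᶜ)) := h1.comp h2
    have h5 : (0:ℝ) < infDist (c θ) Uᶜ := hposU _ (hKU (hcK θ))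
    exact (h3.log h5.ne').neg
  -- integral convergence
  have hμ : ∀ k, IntegrableOn (g k) (Ioc 0 (2 * π)) volume := fun k => (hgcont k).integrableOn_Ioc
  have hμG : IntegrableOn G (Ioc 0 (2 * π)) volume := hGcont.integrableOn_Ioc
  have hItends : Tendsto (fun k => ∫ θ in Ioc 0 (2 * π), g k θ) atTop
      (𝓝 (∫ θ in Ioc 0 (2 * π), G θ)) :=
    integral_tendsto_of_tendsto_of_antitone hμ hμG (ae_of_all _ hganti) (ae_of_all _ hgtends)
  -- the inequality at each stage
  have hstep : ∀ k : ℕ, -Real.log (infDist a (D (N + k))ᶜ) ≤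
      (2 * π)⁻¹ * ∫ θ in (0:ℝ)..(2 * π), g k θ := by
    intro k
    have hne : D (N + k) ≠ Set.univ := fun h => huniv
      (eq_univ_of_univ_subset (h ▸ hDsub (N + k)))
    exact ((hpc (N + k)).2.resolve_left hne).2 a v r hr
      (fun t ht => hKDk k ⟨t, by simpa [dist_zero_right] using ht, rfl⟩)
  -- pass to the limit
  have hL : Tendsto (fun k => -Real.log (infDist a (D (N + k))ᶜ)) atTop
      (𝓝 (-Real.log (infDist a Uᶜ))) := by
    have h1 := htends a (hKU haK)
    have h2 : Tendsto (fun k : ℕ => N + k) atTop atTop :=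
      tendsto_atTop_mono (fun k => Nat.le_add_left k N) tendsto_id
    exact ((h1.comp h2).log (hposU _ (hKU haK)).ne').neg
  have hR : Tendsto (fun k => (2 * π)⁻¹ * ∫ θ in (0:ℝ)..(2 * π), g k θ) atTop
      (𝓝 ((2 * π)⁻¹ * ∫ θ in (0:ℝ)..(2 * π), G θ)) := by
    simp_rw [intervalIntegral.integral_of_le h2π]
    exact hItends.const_mul _
  have hfin := le_of_tendsto_of_tendsto' hL hR hstep
  rw [intervalIntegral.integral_of_le h2π] at hfin ⊢
  exact hfin
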